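/- Under the stated assumptions, for any finite multisets X, Y of admissible parameters and any admissible parameter ζ, the shifted tau-functions satisfy (ρ[X ζ̄] · τ[Y ζ]) / (τ[X] · τ[Y]) = ⟨b[X]| G[X] · K · G[Y] |α⟩, where K = (L−ζ)⁻¹ + A[Y](R−ζ)⁻¹ B[Y]. -/

import Mathlib

open Matrix

noncomputable section

/-- The diagonal matrix `∏_{ξ ∈ X} (diagonal d − ξ·1)` for a multiset `X` of parameters. -/
def sProd {n : ℕ} (d : Fin n → ℂ) (X : Multiset ℂ) : Matrix (Fin n) (Fin n) ℂ :=
  Matrix.diagonal fun i => (X.map fun ξ => d i - ξ).prod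

/-- The multiset-shifted matrix `A[X] = A·∏_{ξ∈X}(R−ξ)⁻¹`. -/
def shA {n : ℕ} (r : Fin n → ℂ) (A : Matrix (Fin n) (Fin n) ℂ) (X : Multiset ℂ) :
    Matrix (Fin n) (Fin n) ℂ :=
  A * (sProd r X)⁻¹

/-- The multiset-shifted matrix `B[X] = B·∏_{ξ∈X}(L−ξ)`. -/
def shB {n : ℕ} (l : Fin n → ℂ) (B : Matrix (Fin n) (Fin n) ℂ) (X : Multiset ℂ) :
    Matrix (Fin n) (Fin n) ℂ :=
  B * sProd l X

/-- The shifted tau-function `τ[X] = det(1 + A[X] B[X])`. -/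
def shtau {n : ℕ} (l r : Fin n → ℂ) (A B : Matrix (Fin n) (Fin n) ℂ) (X : Multiset ℂ) : ℂ :=
  (1 + shA r A X * shB l B X).det

/-- The shifted tau-function `σ[X] = τ[X]·⟨a[X]|(1+B[X]A[X])⁻¹|β⟩`. -/
def shsigma {n : ℕ} (l r a β : Fin n → ℂ) (A B : Matrix (Fin n) (Fin n) ℂ)
    (X : Multiset ℂ) : ℂ :=
  shtau l r A B X *
    (Matrix.vecMul (Matrix.vecMul a (sProd r X)⁻¹) (1 + shB l B X * shA r A X)⁻¹ ⬝ᵥ β)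

/-- The shifted tau-function `ρ[X] = τ[X]·⟨b[X]|(1+A[X]B[X])⁻¹|α⟩`. -/
def shrho {n : ℕ} (l r b α : Fin n → ℂ) (A B : Matrix (Fin n) (Fin n) ℂ)
    (X : Multiset ℂ) : ℂ :=
  shtau l r A B X *
    (Matrix.vecMul (Matrix.vecMul b (sProd l X)) (1 + shA r A X * shB l B X)⁻¹ ⬝ᵥ α)

/-- A parameter `ξ` is admissible if `R − ξ·1` and `L − ξ·1` are invertible. -/
def Adm {n : ℕ} (l r : Fin n → ℂ) (ξ : ℂ) : Prop :=
  IsUnit (Matrix.diagonal r - ξ • (1 : Matrix (Fin n) (Fin n) ℂ)) ∧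
    IsUnit (Matrix.diagonal l - ξ • (1 : Matrix (Fin n) (Fin n) ℂ))

/-- `Γ_ξ(Y, X) = ∏_{η∈Y}(ξ−η) / ∏_{η∈X, η≠ξ}(ξ−η)`. -/
def Gam (Y : Multiset ℂ) (X : Finset ℂ) (ξ : ℂ) : ℂ :=
  (Y.map fun η => ξ - η).prod / ∏ η ∈ X.erase ξ, (ξ - η)

namespace St7Aux

variable {n : ℕ}

lemma vecMulVec_mul' (u v : Fin n → ℂ) (M : Matrix (Fin n) (Fin n) ℂ) :
    vecMulVec u v * M = vecMulVec u (vecMul v M) := by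
  ext i j
  simp [vecMulVec_apply, mul_apply, vecMul, dotProduct, Finset.mul_sum, mul_assoc]

lemma mul_vecMulVec' (M : Matrix (Fin n) (Fin n) ℂ) (u v : Fin n → ℂ) :
    M * vecMulVec u v = vecMulVec (M *ᵥ u) v := by
  ext i j
  simp [vecMulVec_apply, mul_apply, mulVec, dotProduct, Finset.sum_mul, mul_assoc]

lemma vecMul_vecMulVec' (x u v : Fin n → ℂ) :
    vecMul x (vecMulVec u v) = (x ⬝ᵥ u) • v := by
  ext j
  simp [vecMulVec_apply, vecMul, dotProduct, Finset.sum_mul, mul_assoc]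

lemma neg_vecMulVec (u v : Fin n → ℂ) : vecMulVec (-u) v = -vecMulVec u v := by
  ext i j
  simp [vecMulVec_apply]

lemma det_one_add_vecMulVec (u v : Fin n → ℂ) :
    (1 + vecMulVec u v).det = 1 + v ⬝ᵥ u := by
  rw [vecMulVec_eq Unit, det_one_add_replicateCol_mul_replicateRow]

/-- Matrix determinant lemma, `vecMulVec` version. -/
lemma det_add_vecMulVec {M : Matrix (Fin n) (Fin n) ℂ} (hM : IsUnit M.det)
    (u v : Fin n → ℂ) :
    (M + vecMulVec u v).det = M.det * (1 + vecMul v M⁻¹ ⬝ᵥ u) := by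
  have h : M + vecMulVec u v = M * (1 + vecMulVec (M⁻¹ *ᵥ u) v) := by
    rw [mul_add, mul_one, mul_vecMulVec', mulVec_mulVec, Matrix.mul_nonsing_inv _ hM,
      one_mulVec]
  rw [h, det_mul, det_one_add_vecMulVec, dotProduct_mulVec]

lemma inv_diagonal' {v : Fin n → ℂ} (hv : ∀ i, v i ≠ 0) :
    (diagonal v)⁻¹ = diagonal (fun i => (v i)⁻¹) := by
  apply Matrix.inv_eq_right_inv
  rw [diagonal_mul_diagonal]
  convert diagonal_one using 2
  ext i
  exact mul_inv_cancel₀ (hv i)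

lemma diag_comm (u v : Fin n → ℂ) :
    diagonal u * diagonal v = diagonal v * diagonal u := by
  rw [diagonal_mul_diagonal, diagonal_mul_diagonal]
  exact congrArg diagonal (funext fun i => mul_comm (u i) (v i))

/-- shifted Sylvester equation. -/
lemma syl_shift {r l : Fin n → ℂ} {B : Matrix (Fin n) (Fin n) ℂ} {β b : Fin n → ℂ}
    (hB : diagonal r * B - B * diagonal l = vecMulVec β b) (P : Matrix (Fin n) (Fin n) ℂ)
    (hP : diagonal l * P = P * diagonal l) (ζ : ℂ) :
    (diagonal r - ζ • 1) * (B * P) - (B * P) * (diagonal l - ζ • 1)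
      = vecMulVec β b * P := by
  have h1 : diagonal r * (B * P) - B * P * diagonal l = vecMulVec β b * P := by
    rw [show B * P * diagonal l = B * diagonal l * P by
        rw [Matrix.mul_assoc, ← hP, ← Matrix.mul_assoc], ← Matrix.mul_assoc, ← sub_mul, hB]
  rw [sub_mul, mul_sub, Matrix.smul_mul, Matrix.mul_smul, one_mul, mul_one,
    sub_sub_sub_cancel_right, h1]

/-- The key pointwise identity. -/
lemma pointwise {α b : Fin n → ℂ} {C N : Matrix (Fin n) (Fin n) ℂ}
    (hC : Cᵀ = C) (hN : N = 1 + diagonal α * C * diagonal b) (hU : IsUnit N) (j : Fin n) :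
    b j * (N⁻¹ *ᵥ α) j = vecMul b N⁻¹ j * α j := by
  have hdN : IsUnit N.det := (Matrix.isUnit_iff_isUnit_det _).mp hU
  set M : Matrix (Fin n) (Fin n) ℂ := 1 + diagonal α * diagonal b * C with hM
  have hcomm : diagonal b * diagonal α = diagonal α * diagonal b := by
    rw [diagonal_mul_diagonal, diagonal_mul_diagonal]
    exact congrArg diagonal (funext fun i => mul_comm (b i) (α i))
  have hdM : IsUnit M.det := by
    have h1 : M.det = (1 + C * (diagonal α * diagonal b)).det := det_one_add_mul_comm _ _
    have h2 : N.det = (1 + C * (diagonal α * diagonal b)).det := by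
      rw [hN, det_one_add_mul_comm, ← Matrix.mul_assoc, hcomm, det_one_add_mul_comm]
    rw [h1, ← h2]; exact hdN
  have hNT : IsUnit Nᵀ.det := by rwa [det_transpose]
  have key1 : M * diagonal b = diagonal b * N := by
    rw [hM, hN, add_mul, mul_add, one_mul, mul_one]
    congr 1
    simp only [← Matrix.mul_assoc]
    rw [hcomm]
  have hNTe : Nᵀ = 1 + diagonal b * C * diagonal α := by
    rw [hN, transpose_add, transpose_one, transpose_mul, transpose_mul, diagonal_transpose,
      diagonal_transpose, hC, Matrix.mul_assoc]
  have key2 : M * diagonal α = diagonal α * Nᵀ := by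
    rw [hM, hNTe, add_mul, mul_add, one_mul, mul_one]
    congr 1
    simp only [← Matrix.mul_assoc]
  have hDbN : diagonal b * N⁻¹ = M⁻¹ * diagonal b := by
    calc diagonal b * N⁻¹ = M⁻¹ * M * diagonal b * N⁻¹ := by
          rw [Matrix.nonsing_inv_mul _ hdM, one_mul]
      _ = M⁻¹ * (diagonal b * N) * N⁻¹ := by rw [Matrix.mul_assoc M⁻¹ M, key1]
      _ = M⁻¹ * diagonal b := by
          rw [Matrix.mul_assoc M⁻¹, Matrix.mul_assoc (diagonal b),
            Matrix.mul_nonsing_inv _ hdN, mul_one]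
  have hDaNT : diagonal α * Nᵀ⁻¹ = M⁻¹ * diagonal α := by
    calc diagonal α * Nᵀ⁻¹ = M⁻¹ * M * diagonal α * Nᵀ⁻¹ := by
          rw [Matrix.nonsing_inv_mul _ hdM, one_mul]
      _ = M⁻¹ * (diagonal α * Nᵀ) * Nᵀ⁻¹ := by rw [Matrix.mul_assoc M⁻¹ M, key2]
      _ = M⁻¹ * diagonal α := by
          rw [Matrix.mul_assoc M⁻¹, Matrix.mul_assoc (diagonal α),
            Matrix.mul_nonsing_inv _ hNT, mul_one]
  have e3 : diagonal b *ᵥ α = diagonal α *ᵥ b := by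
    ext i; simp [mulVec_diagonal, mul_comm]
  have e4 : diagonal b *ᵥ (N⁻¹ *ᵥ α) = diagonal α *ᵥ (Nᵀ⁻¹ *ᵥ b) := by
    rw [mulVec_mulVec, mulVec_mulVec, hDbN, hDaNT, ← mulVec_mulVec, ← mulVec_mulVec, e3]
  have e5 := congrFun e4 j
  simp only [mulVec_diagonal] at e5
  rw [e5, ← transpose_nonsing_inv, mulVec_transpose, mul_comm]

/-- rank-one update of `ρ`-type scalars. -/
lemma rankone_rho {M : Matrix (Fin n) (Fin n) ℂ} (u v αv : Fin n → ℂ)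
    (hM : IsUnit M) (hW : IsUnit (M + vecMulVec u v)) :
    (M + vecMulVec u v).det * (vecMul v (M + vecMulVec u v)⁻¹ ⬝ᵥ αv)
      = M.det * (vecMul v M⁻¹ ⬝ᵥ αv) := by
  have hdM : IsUnit M.det := (Matrix.isUnit_iff_isUnit_det _).mp hM
  set W : Matrix (Fin n) (Fin n) ℂ := M + vecMulVec u v with hWdef
  have hdW : IsUnit W.det := (Matrix.isUnit_iff_isUnit_det _).mp hW
  set c : ℂ := vecMul v M⁻¹ ⬝ᵥ u with hc
  have hdet : W.det = M.det * (1 + c) := det_add_vecMulVec hdM u v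
  have h1c : (1 : ℂ) + c ≠ 0 := by
    intro h
    rw [hdet, h, mul_zero] at hdW
    simp at hdW
  have hv : vecMul (vecMul v M⁻¹) W = (1 + c) • v := by
    rw [hWdef, vecMul_add, vecMul_vecMul, Matrix.nonsing_inv_mul _ hdM, vecMul_one,
      vecMul_vecMulVec', ← hc, add_smul, one_smul]
  have hvW : vecMul v W⁻¹ = (1 + c)⁻¹ • vecMul v M⁻¹ := by
    have h2 : vecMul (vecMul (vecMul v M⁻¹) W) W⁻¹ = vecMul v M⁻¹ := by
      rw [vecMul_vecMul, Matrix.mul_nonsing_inv _ hdW, vecMul_one]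
    rw [hv] at h2
    rw [← h2, smul_vecMul, smul_smul, inv_mul_cancel₀ h1c, one_smul]
  rw [hvW, hdet, smul_dotProduct, smul_eq_mul]
  field_simp

lemma adm_ne {d : Fin n → ℂ} {ξ : ℂ}
    (h : IsUnit (diagonal d - ξ • (1 : Matrix (Fin n) (Fin n) ℂ))) (i : Fin n) :
    d i - ξ ≠ 0 := by
  rw [smul_one_eq_diagonal, diagonal_sub, Matrix.isUnit_diagonal] at h
  have h2 := h.map (Pi.evalMonoidHom (fun _ : Fin n => ℂ) i)
  simpa [isUnit_iff_ne_zero] using h2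

lemma sProd_entry_ne {d : Fin n → ℂ} {Z : Multiset ℂ}
    (h : ∀ ξ ∈ Z, IsUnit (diagonal d - ξ • (1 : Matrix (Fin n) (Fin n) ℂ))) (i : Fin n) :
    (Z.map fun ξ => d i - ξ).prod ≠ 0 := by
  apply Multiset.prod_ne_zero
  intro h0
  obtain ⟨ξ, hξ, he⟩ := Multiset.mem_map.mp h0
  exact adm_ne (h ξ hξ) i he

/-- Entry formula for a Sylvester-equation solution. -/
lemma syl_entry {l r α a : Fin n → ℂ} (hlr : ∀ j k, l j ≠ r k)
    {A : Matrix (Fin n) (Fin n) ℂ}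
    (hA : diagonal l * A - A * diagonal r = vecMulVec α a) (j k : Fin n) :
    A j k = α j * a k * (l j - r k)⁻¹ := by
  have h := congrFun (congrFun hA j) k
  simp only [Matrix.sub_apply, diagonal_mul, mul_diagonal, vecMulVec_apply] at h
  have hne : l j - r k ≠ 0 := sub_ne_zero.mpr (hlr j k)
  rw [← div_eq_mul_inv, eq_div_iff hne]
  linear_combination h

/-- Cauchy-type decomposition `A[g]·B[h] = Dα · C · D(b·h)` with `C` symmetric. -/
lemma AB_decomp {l r α a β b : Fin n → ℂ} (hlr : ∀ j k, l j ≠ r k)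
    {A B : Matrix (Fin n) (Fin n) ℂ}
    (hA : diagonal l * A - A * diagonal r = vecMulVec α a)
    (hB : diagonal r * B - B * diagonal l = vecMulVec β b)
    (g h : Fin n → ℂ) :
    ∃ C : Matrix (Fin n) (Fin n) ℂ, Cᵀ = C ∧
      (A * diagonal g) * (B * diagonal h)
        = diagonal α * C * diagonal (fun k => b k * h k) := by
  have hBe : ∀ m k, B m k = β m * b k * (r m - l k)⁻¹ := by
    intro m k
    have : ∀ j k, r j ≠ l k := fun j k => (hlr k j).symm
    exact syl_entry this hB m k
  have hAe := syl_entry hlr hA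
  refine ⟨Matrix.of fun j k => ∑ m, (a m * g m * β m) * ((l j - r m)⁻¹ * (r m - l k)⁻¹),
    ?_, ?_⟩
  · ext j k
    simp only [transpose_apply, Matrix.of_apply]
    refine Finset.sum_congr rfl fun m _ => ?_
    rw [show r m - l j = -(l j - r m) by ring, show r m - l k = -(l k - r m) by ring,
      inv_neg, inv_neg]
    ring
  · ext j k
    rw [mul_apply]
    simp only [mul_diagonal, diagonal_mul, Matrix.of_apply]
    rw [Finset.mul_sum, Finset.sum_mul]
    refine Finset.sum_congr rfl fun m _ => ?_
    rw [hAe j m, hBe m k]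
    ring

end St7Aux

open St7Aux

/-- `sProd` of a cons. -/
lemma sProd_cons {n : ℕ} (d : Fin n → ℂ) (ζ : ℂ) (Z : Multiset ℂ) :
    sProd d (ζ ::ₘ Z) = (Matrix.diagonal d - ζ • 1) * sProd d Z := by
  rw [smul_one_eq_diagonal, diagonal_sub]
  unfold sProd
  rw [diagonal_mul_diagonal]
  exact congrArg Matrix.diagonal (funext fun i => by
    simp [Multiset.map_cons, Multiset.prod_cons])

/-- `(ρ[Xζ̄]·τ[Yζ])/(τ[X]·τ[Y]) = ⟨b[X]|G[X]·K·G[Y]|α⟩` with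
`K = (L−ζ)⁻¹ + A[Y](R−ζ)⁻¹B[Y]`. -/
theorem statement7 {n : ℕ} (hn : 1 ≤ n) (l r : Fin n → ℂ)
    (hlr : ∀ j k, l j ≠ r k) (α β a b : Fin n → ℂ)
    (A B : Matrix (Fin n) (Fin n) ℂ)
    (hA : Matrix.diagonal l * A - A * Matrix.diagonal r = Matrix.vecMulVec α a)
    (hB : Matrix.diagonal r * B - B * Matrix.diagonal l = Matrix.vecMulVec β b)
    (X Y : Multiset ℂ) (ζ : ℂ)
    (hX : ∀ ξ ∈ X, Adm l r ξ) (hY : ∀ ξ ∈ Y, Adm l r ξ) (hζ : Adm l r ζ)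
    (hiX : IsUnit (1 + shA r A X * shB l B X))
    (hiY : IsUnit (1 + shA r A Y * shB l B Y))
    (hiXz : IsUnit (1 + (shA r A X * (Matrix.diagonal r - ζ • 1)) *
        (shB l B X * (Matrix.diagonal l - ζ • 1)⁻¹)))
    (hiYz : IsUnit (1 + shA r A (ζ ::ₘ Y) * shB l B (ζ ::ₘ Y))) :
    ((1 + (shA r A X * (Matrix.diagonal r - ζ • 1)) *
          (shB l B X * (Matrix.diagonal l - ζ • 1)⁻¹)).det *
        (Matrix.vecMul
            (Matrix.vecMul (Matrix.vecMul b (sProd l X)) (Matrix.diagonal l - ζ • 1)⁻¹)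
            (1 + (shA r A X * (Matrix.diagonal r - ζ • 1)) *
              (shB l B X * (Matrix.diagonal l - ζ • 1)⁻¹))⁻¹ ⬝ᵥ α)) *
        shtau l r A B (ζ ::ₘ Y) / (shtau l r A B X * shtau l r A B Y)
      = Matrix.vecMul (Matrix.vecMul b (sProd l X))
          ((1 + shA r A X * shB l B X)⁻¹ *
            ((Matrix.diagonal l - ζ • 1)⁻¹
              + shA r A Y * (Matrix.diagonal r - ζ • 1)⁻¹ * shB l B Y) *
            (1 + shA r A Y * shB l B Y)⁻¹) ⬝ᵥ α := by
  obtain ⟨hζR, hζL⟩ := hζ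
  simp only [shtau]
  set Rz : Matrix (Fin n) (Fin n) ℂ := Matrix.diagonal r - ζ • 1 with hRzdef
  set Lz : Matrix (Fin n) (Fin n) ℂ := Matrix.diagonal l - ζ • 1 with hLzdef
  set AX := shA r A X with hAXdef
  set BX := shB l B X with hBXdef
  set AY := shA r A Y with hAYdef
  set BY := shB l B Y with hBYdef
  set bX := Matrix.vecMul b (sProd l X) with hbXdef
  set M : Matrix (Fin n) (Fin n) ℂ := 1 + AX * BX with hMdef
  set N : Matrix (Fin n) (Fin n) ℂ := 1 + AY * BY with hNdef
  set bY := Matrix.vecMul b (sProd l Y) with hbYdef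
  set aY := Matrix.vecMul a (sProd r Y)⁻¹ with haYdef
  -- basic invertibility facts
  have hζr : ∀ i, r i - ζ ≠ 0 := adm_ne hζR
  have hζl : ∀ i, l i - ζ ≠ 0 := adm_ne hζL
  have hRzd : Rz = Matrix.diagonal (fun i => r i - ζ) := by
    rw [hRzdef, smul_one_eq_diagonal, diagonal_sub]
  have hLzd : Lz = Matrix.diagonal (fun i => l i - ζ) := by
    rw [hLzdef, smul_one_eq_diagonal, diagonal_sub]
  have hRzi : Rz⁻¹ = Matrix.diagonal (fun i => (r i - ζ)⁻¹) := by
    rw [hRzd]; exact inv_diagonal' hζr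
  have hLzi : Lz⁻¹ = Matrix.diagonal (fun i => (l i - ζ)⁻¹) := by
    rw [hLzd]; exact inv_diagonal' hζl
  have hRzdu : IsUnit Rz.det := (Matrix.isUnit_iff_isUnit_det _).mp hζR
  have hLzdu : IsUnit Lz.det := (Matrix.isUnit_iff_isUnit_det _).mp hζL
  have hLL : Lz * Lz⁻¹ = 1 := Matrix.mul_nonsing_inv _ hLzdu
  have hLL' : Lz⁻¹ * Lz = 1 := Matrix.nonsing_inv_mul _ hLzdu
  have hRR : Rz * Rz⁻¹ = 1 := Matrix.mul_nonsing_inv _ hRzdu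
  have hRR' : Rz⁻¹ * Rz = 1 := Matrix.nonsing_inv_mul _ hRzdu
  have hMdu : IsUnit M.det := (Matrix.isUnit_iff_isUnit_det _).mp hiX
  have hNdu : IsUnit N.det := (Matrix.isUnit_iff_isUnit_det _).mp hiY
  have hNN : N * N⁻¹ = 1 := Matrix.mul_nonsing_inv _ hNdu
  have hprX : ∀ i, (X.map fun ξ => r i - ξ).prod ≠ 0 :=
    sProd_entry_ne (fun ξ h => (hX ξ h).1)
  have hprY : ∀ i, (Y.map fun ξ => r i - ξ).prod ≠ 0 :=
    sProd_entry_ne (fun ξ h => (hY ξ h).1)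
  have hsrXi : (sProd r X)⁻¹
      = Matrix.diagonal (fun i => ((X.map fun ξ => r i - ξ).prod)⁻¹) :=
    inv_diagonal' hprX
  have hsrYi : (sProd r Y)⁻¹
      = Matrix.diagonal (fun i => ((Y.map fun ξ => r i - ξ).prod)⁻¹) :=
    inv_diagonal' hprY
  -- convenient descriptions of the shifted data
  have hAXd2 : AX = A * Matrix.diagonal (fun i => ((X.map fun ξ => r i - ξ).prod)⁻¹) := by
    rw [hAXdef]
    show A * (sProd r X)⁻¹ = _
    rw [hsrXi]
  have hAYd2 : AY = A * Matrix.diagonal (fun i => ((Y.map fun ξ => r i - ξ).prod)⁻¹) := by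
    rw [hAYdef]
    show A * (sProd r Y)⁻¹ = _
    rw [hsrYi]
  have hBXd2 : BX = B * Matrix.diagonal (fun i => (X.map fun ξ => l i - ξ).prod) := by
    rw [hBXdef]; rfl
  have hBYd2 : BY = B * Matrix.diagonal (fun i => (Y.map fun ξ => l i - ξ).prod) := by
    rw [hBYdef]; rfl
  have hbXf : bX = fun k => b k * (X.map fun ξ => l k - ξ).prod := by
    rw [hbXdef]; funext k; exact vecMul_diagonal _ _ _
  have hbYf : bY = fun k => b k * (Y.map fun ξ => l k - ξ).prod := by
    rw [hbYdef]; funext k; exact vecMul_diagonal _ _ _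
  have haYf : aY = fun m => a m * ((Y.map fun ξ => r m - ξ).prod)⁻¹ := by
    rw [haYdef, hsrYi]; funext m; exact vecMul_diagonal _ _ _
  -- shifted Sylvester equations
  have hBXs : Rz * BX - BX * Lz = vecMulVec β bX := by
    rw [hRzdef, hLzdef, hBXd2, hbXdef]
    have h := syl_shift hB
      (Matrix.diagonal (fun i => (X.map fun ξ => l i - ξ).prod)) (diag_comm _ _) ζ
    rw [vecMulVec_mul'] at h
    convert h using 3
    rfl
  have hBYs : Rz * BY - BY * Lz = vecMulVec β bY := by
    rw [hRzdef, hLzdef, hBYd2]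
    have h := syl_shift hB
      (Matrix.diagonal (fun i => (Y.map fun ξ => l i - ξ).prod)) (diag_comm _ _) ζ
    rw [vecMulVec_mul'] at h
    convert h using 3
    rfl
  have hAYs : Lz * AY - AY * Rz = vecMulVec α aY := by
    rw [hRzdef, hLzdef, hAYd2]
    have h := syl_shift hA
      (Matrix.diagonal (fun i => ((Y.map fun ξ => r i - ξ).prod)⁻¹))
      (by rw [← hsrYi]; rw [hsrYi]; exact diag_comm _ _) ζ
    rw [vecMulVec_mul'] at h
    convert h using 3
  have hRzBX : Rz * BX = vecMulVec β bX + BX * Lz := sub_eq_iff_eq_add.mp hBXs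
  have hRzBY : Rz * BY = vecMulVec β bY + BY * Lz := sub_eq_iff_eq_add.mp hBYs
  have hBYLz : BY * Lz = Rz * BY - vecMulVec β bY := by
    rw [hRzBY, add_sub_cancel_left]
  have hLzAY : Lz * AY = vecMulVec α aY + AY * Rz := sub_eq_iff_eq_add.mp hAYs
  -- Step 1 : the first factor equals τ[X]·s
  have hW : 1 + AX * Rz * (BX * Lz⁻¹) = M + vecMulVec (AX *ᵥ β) (vecMul bX Lz⁻¹) := by
    have h1 : AX * Rz * (BX * Lz⁻¹) = AX * (Rz * BX) * Lz⁻¹ := by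
      simp only [Matrix.mul_assoc]
    rw [h1, hRzBX, Matrix.mul_add, Matrix.add_mul, mul_vecMulVec', vecMulVec_mul',
      show AX * (BX * Lz) * Lz⁻¹ = AX * BX * (Lz * Lz⁻¹) by simp only [Matrix.mul_assoc],
      hLL, mul_one, hMdef]
    abel
  have hF1 : (1 + AX * Rz * (BX * Lz⁻¹)).det *
      (Matrix.vecMul (Matrix.vecMul bX Lz⁻¹) (1 + AX * Rz * (BX * Lz⁻¹))⁻¹ ⬝ᵥ α)
      = M.det * (Matrix.vecMul (Matrix.vecMul bX Lz⁻¹) M⁻¹ ⬝ᵥ α) := by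
    rw [hW]
    exact rankone_rho _ _ _ hiX (by rw [← hW]; exact hiXz)
  -- Step 2 : τ[ζY] = τ[Y]·(1−t)
  have hAzY : shA r A (ζ ::ₘ Y) = AY * Rz⁻¹ := by
    rw [hAYdef, hRzdef]
    show A * (sProd r (ζ ::ₘ Y))⁻¹ = shA r A Y * (Matrix.diagonal r - ζ • 1)⁻¹
    rw [sProd_cons, Matrix.mul_inv_rev, ← Matrix.mul_assoc]
    rfl
  have hBzY : shB l B (ζ ::ₘ Y) = BY * Lz := by
    rw [hBYdef, hLzdef]
    show B * sProd l (ζ ::ₘ Y) = shB l B Y * (Matrix.diagonal l - ζ • 1)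
    rw [sProd_cons]
    show B * ((Matrix.diagonal l - ζ • 1) * sProd l Y) = B * sProd l Y * (Matrix.diagonal l - ζ • 1)
    rw [Matrix.mul_assoc]
    congr 1
    rw [smul_one_eq_diagonal, diagonal_sub]
    exact diag_comm _ _
  have hNz : 1 + AY * Rz⁻¹ * (BY * Lz)
      = N + vecMulVec (-((AY * Rz⁻¹) *ᵥ β)) bY := by
    rw [hBYLz, Matrix.mul_sub,
      show AY * Rz⁻¹ * (Rz * BY) = AY * (Rz⁻¹ * Rz) * BY by simp only [Matrix.mul_assoc],
      hRR', Matrix.mul_one, mul_vecMulVec', St7Aux.neg_vecMulVec, hNdef]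
    abel
  have hF2 : (1 + AY * Rz⁻¹ * (BY * Lz)).det
      = N.det * (1 - Matrix.vecMul bY N⁻¹ ⬝ᵥ ((AY * Rz⁻¹) *ᵥ β)) := by
    rw [hNz, det_add_vecMulVec hNdu, dotProduct_neg, ← sub_eq_add_neg]
  -- Step 3 : the right-hand side equals w·(1+q)
  have hARz : AY * Rz⁻¹ = Lz⁻¹ * (AY + vecMulVec α (Matrix.vecMul aY Rz⁻¹)) := by
    have h1 : Lz * (AY * Rz⁻¹) = AY + vecMulVec α (Matrix.vecMul aY Rz⁻¹) := by
      rw [← Matrix.mul_assoc, hLzAY, Matrix.add_mul, vecMulVec_mul',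
        show AY * Rz * Rz⁻¹ = AY * (Rz * Rz⁻¹) by simp only [Matrix.mul_assoc],
        hRR, Matrix.mul_one, add_comm]
    rw [← h1, ← Matrix.mul_assoc, hLL', one_mul]
  have hKpre : Lz⁻¹ + AY * Rz⁻¹ * BY
      = Lz⁻¹ * N + Lz⁻¹ * vecMulVec α (Matrix.vecMul (Matrix.vecMul aY Rz⁻¹) BY) := by
    rw [hARz, Matrix.mul_assoc, Matrix.add_mul, vecMulVec_mul', Matrix.mul_add,
      hNdef, Matrix.mul_add, Matrix.mul_one]
    abel
  have hK : (Lz⁻¹ + AY * Rz⁻¹ * BY) * N⁻¹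
      = Lz⁻¹ + Lz⁻¹ * vecMulVec α
          (Matrix.vecMul (Matrix.vecMul (Matrix.vecMul aY Rz⁻¹) BY) N⁻¹) := by
    rw [hKpre, Matrix.add_mul, Matrix.mul_assoc Lz⁻¹ N N⁻¹, hNN, Matrix.mul_one,
      Matrix.mul_assoc, vecMulVec_mul']
  have hRHS : Matrix.vecMul bX (M⁻¹ * (Lz⁻¹ + AY * Rz⁻¹ * BY) * N⁻¹) ⬝ᵥ α
      = (Matrix.vecMul (Matrix.vecMul bX M⁻¹) Lz⁻¹ ⬝ᵥ α)
        * (1 + Matrix.vecMul (Matrix.vecMul (Matrix.vecMul aY Rz⁻¹) BY) N⁻¹ ⬝ᵥ α) := by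
    rw [Matrix.mul_assoc, hK, Matrix.mul_add, vecMul_add, add_dotProduct,
      ← Matrix.mul_assoc, mul_vecMulVec', vecMul_vecMulVec',
      smul_dotProduct, smul_eq_mul, dotProduct_mulVec]
    simp only [← vecMul_vecMul]
    ring
  -- pointwise identities
  obtain ⟨CX, hCXs, hCXe⟩ := AB_decomp hlr hA hB
    (fun i => ((X.map fun ξ => r i - ξ).prod)⁻¹) (fun i => (X.map fun ξ => l i - ξ).prod)
  have hMeq : M = 1 + Matrix.diagonal α * CX *
      Matrix.diagonal (fun k => b k * (X.map fun ξ => l k - ξ).prod) := by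
    rw [hMdef, hAXd2, hBXd2, hCXe]
  have ptX : ∀ j, bX j * (M⁻¹ *ᵥ α) j = Matrix.vecMul bX M⁻¹ j * α j := by
    intro j
    rw [hbXf]
    exact pointwise hCXs hMeq hiX j
  obtain ⟨CY, hCYs, hCYe⟩ := AB_decomp hlr hA hB
    (fun i => ((Y.map fun ξ => r i - ξ).prod)⁻¹) (fun i => (Y.map fun ξ => l i - ξ).prod)
  have hNeq : N = 1 + Matrix.diagonal α * CY *
      Matrix.diagonal (fun k => b k * (Y.map fun ξ => l k - ξ).prod) := by
    rw [hNdef, hAYd2, hBYd2, hCYe]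
  have ptY : ∀ j, bY j * (N⁻¹ *ᵥ α) j = Matrix.vecMul bY N⁻¹ j * α j := by
    intro j
    rw [hbYf]
    exact pointwise hCYs hNeq hiY j
  -- entry formulas
  have hAYe : ∀ j m, AY j m = α j * aY m * (l j - r m)⁻¹ := by
    intro j m
    rw [hAYd2, mul_diagonal, syl_entry hlr hA j m, haYf]
    ring
  have hBYe : ∀ m j, BY m j = β m * bY j * (r m - l j)⁻¹ := by
    intro m j
    have hrl : ∀ j k, r j ≠ l k := fun j k => (hlr k j).symm
    rw [hBYd2, mul_diagonal, syl_entry hrl hB m j, hbYf]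
    ring
  -- s = w
  have hsw : Matrix.vecMul (Matrix.vecMul bX Lz⁻¹) M⁻¹ ⬝ᵥ α
      = Matrix.vecMul (Matrix.vecMul bX M⁻¹) Lz⁻¹ ⬝ᵥ α := by
    rw [← dotProduct_mulVec, hLzi]
    simp only [dotProduct, vecMul_diagonal]
    refine Finset.sum_congr rfl fun j _ => ?_
    have h := ptX j
    linear_combination (l j - ζ)⁻¹ * h
  -- q = -t
  have hqt : Matrix.vecMul (Matrix.vecMul (Matrix.vecMul aY Rz⁻¹) BY) N⁻¹ ⬝ᵥ α
      = -(Matrix.vecMul bY N⁻¹ ⬝ᵥ ((AY * Rz⁻¹) *ᵥ β)) := by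
    rw [← dotProduct_mulVec, ← dotProduct_mulVec, ← mulVec_mulVec, hRzi]
    have h1 : Matrix.vecMul aY (Matrix.diagonal fun i => (r i - ζ)⁻¹)
        = fun m => aY m * (r m - ζ)⁻¹ := by
      funext m; exact vecMul_diagonal _ _ _
    have h2 : (Matrix.diagonal fun i => (r i - ζ)⁻¹) *ᵥ β
        = fun m => (r m - ζ)⁻¹ * β m := by
      funext m; exact mulVec_diagonal _ _ _
    rw [h1, h2]
    have expand : ∀ (P : Matrix (Fin n) (Fin n) ℂ) (u v : Fin n → ℂ),
        u ⬝ᵥ (P *ᵥ v) = ∑ i, ∑ j, u i * (P i j * v j) := by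
      intro P u v
      simp [dotProduct, mulVec, Finset.mul_sum]
    rw [expand, expand]
    conv_lhs => rw [Finset.sum_comm]
    rw [← neg_eq_iff_eq_neg, ← Finset.sum_neg_distrib]
    refine Finset.sum_congr rfl fun j _ => ?_
    rw [← Finset.sum_neg_distrib]
    refine Finset.sum_congr rfl fun m _ => ?_
    rw [hBYe m j, hAYe j m,
      show (r m - l j)⁻¹ = -(l j - r m)⁻¹ by
        rw [show r m - l j = -(l j - r m) by ring, inv_neg]]
    have h := ptY j
    linear_combination (aY m * (r m - ζ)⁻¹ * β m * (l j - r m)⁻¹) * h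
  -- final assembly
  rw [hF1, hAzY, hBzY, hF2, hRHS, hsw, hqt]
  have hMd0 : M.det ≠ 0 := hMdu.ne_zero
  have hNd0 : N.det ≠ 0 := hNdu.ne_zero
  field_simp
  ring
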